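/- Let α be a positive even integer, n = α+3, and f(p) = Σ_{j=0}^{n−1} (−1)^j cos(jπ/n)^p for p > 0. Then f(p) = 0 for every odd positive integer p < n, and f(p) < 0 for all p ∈ (α−1, α+1). -/

import Mathlib

open Finset Real Filter

/-- The odd power function `ψ_p(x) = sign(x)|x|^p`. -/
noncomputable def psiPow (p x : ℝ) : ℝ := Real.sign x * |x| ^ p

open Finset Real

lemma expsum_card_zeros : ∀ (k : ℕ) (a t : Fin (k+1) → ℝ), (∀ i, a i ≠ 0) →
    Function.Injective t → ∀ (Z : Finset ℝ),
    (∀ p ∈ Z, ∑ i, a i * Real.exp (t i * p) = 0) → Z.card ≤ k := by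
  intro k
  induction k with
  | zero =>
    intro a t ha ht Z hZ
    simp only [Nat.le_zero, Finset.card_eq_zero]
    rw [Finset.eq_empty_iff_forall_notMem]
    intro p hp
    have := hZ p hp
    rw [Fin.sum_univ_one] at this
    exact (mul_ne_zero (ha 0) (Real.exp_ne_zero _)) this
  | succ k ih =>
    intro a t ha ht Z hZ
    by_contra hcard
    push_neg at hcard
    obtain ⟨Z', hZ'sub, hZ'card⟩ := Finset.exists_subset_card_eq hcard
    set z : Fin (k+2) ≃o Z' := Z'.orderIsoOfFin hZ'card with hz
    set c : Fin (k+2) → ℝ := fun i => t i - t 0 with hc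
    set g : ℝ → ℝ := fun p => ∑ i, a i * Real.exp (c i * p) with hgdef
    have hg0 : ∀ p ∈ Z', g p = 0 := by
      intro p hp
      have h1 : g p = (∑ i, a i * Real.exp (t i * p)) * Real.exp (-(t 0) * p) := by
        rw [hgdef, Finset.sum_mul]
        refine Finset.sum_congr rfl fun i _ => ?_
        rw [mul_assoc, ← Real.exp_add]
        simp only [hc]
        ring_nf
      rw [h1, hZ p (hZ'sub hp), zero_mul]
    have hderiv : ∀ p : ℝ, HasDerivAt g (∑ i, a i * c i * Real.exp (c i * p)) p := by
      intro p
      refine HasDerivAt.fun_sum fun i _ => ?_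
      have h1 : HasDerivAt (fun p : ℝ => c i * p) (c i) p := by
        simpa using (hasDerivAt_id p).const_mul (c i)
      have := (h1.exp).const_mul (a i)
      exact this.congr_deriv (by ring)
    have hz_lt : ∀ (j : Fin (k+1)), ((z j.castSucc : ℝ)) < ((z j.succ : ℝ)) := by
      intro j
      exact_mod_cast z.strictMono (Fin.castSucc_lt_succ (i := j))
    have hrolle : ∀ j : Fin (k+1), ∃ x ∈ Set.Ioo ((z j.castSucc : ℝ)) ((z j.succ : ℝ)),
        ∑ i, a i * c i * Real.exp (c i * x) = 0 := by
      intro j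
      refine exists_hasDerivAt_eq_zero (hz_lt j) ?_ ?_ (fun x _ => hderiv x)
      · exact fun x _ => (hderiv x).continuousAt.continuousWithinAt
      · rw [hg0 _ (z j.castSucc).2, hg0 _ (z j.succ).2]
    choose w hw1 hwz using hrolle
    have hwmono : StrictMono w := by
      rw [Fin.strictMono_iff_lt_succ]
      intro j
      calc w j.castSucc < (z (j.castSucc).succ : ℝ) := (hw1 j.castSucc).2
        _ = (z (j.succ).castSucc : ℝ) := by rw [Fin.succ_castSucc]
        _ < w j.succ := (hw1 j.succ).1
    have hwinj : Function.Injective w := hwmono.injective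
    have hcard2 : (Finset.image w Finset.univ).card = k + 1 := by
      rw [Finset.card_image_of_injective _ hwinj, Finset.card_univ, Fintype.card_fin]
    have := ih (fun i => a i.succ * c i.succ) (fun i => c i.succ)
      (fun i => mul_ne_zero (ha i.succ) (sub_ne_zero.mpr (fun h => (Fin.succ_ne_zero i) (ht h))))
      (fun i j hij => by
        have : t i.succ = t j.succ := by
          have h2 : t i.succ - t 0 = t j.succ - t 0 := hij
          linarith
        exact Fin.succ_injective _ (ht this))
      (Finset.image w Finset.univ)
      (by
        intro p hp
        obtain ⟨j, _, rfl⟩ := Finset.mem_image.mp hp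
        have := hwz j
        rw [Fin.sum_univ_succ] at this
        simpa [hc] using this)
    omega


lemma part1_sum (N p : ℕ) (hN : Odd N) (hp : Odd p) (hpN : p < N) :
    ∑ j ∈ Finset.range N, ((-1:ℝ)^j * Real.cos (j * Real.pi / N))^p = 0 := by
  have hN0 : (N:ℝ) ≠ 0 := by
    have := hN.pos
    positivity
  obtain ⟨h, hh⟩ : ∃ h : ℕ, N + 1 = 2 * h := by
    rcases hN with ⟨s, rfl⟩
    exact ⟨s + 1, by ring⟩
  have hh' : (N:ℝ) + 1 = 2 * h := by exact_mod_cast hh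
  set θ : ℝ := (N+1) * Real.pi / N with hθ
  set w : ℂ := Complex.exp (θ * Complex.I) with hwdef
  have hw0 : w ≠ 0 := Complex.exp_ne_zero _
  have hwz : ∀ m : ℤ, w ^ m = Complex.exp ((m * θ : ℝ) * Complex.I) := by
    intro m
    rw [hwdef, ← Complex.exp_int_mul]
    push_cast
    ring_nf
  have termA : ∀ j : ℕ, (((-1:ℝ)^j * Real.cos (j * Real.pi / N) : ℝ) : ℂ)
      = (w^(j:ℤ) + w^(-(j:ℤ)))/2 := by
    intro j
    have h1 : (-1:ℝ)^j * Real.cos ((j:ℝ) * Real.pi / N) = Real.cos ((j:ℝ)*θ) := by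
      rw [← Real.cos_add_nat_mul_pi]
      congr 1
      rw [hθ]
      have : (j:ℝ) * ((N+1) * Real.pi / N) = ((j:ℝ) * ((N+1) * Real.pi)) / N := by ring
      rw [this, eq_div_iff hN0, add_mul, div_mul_cancel₀ _ hN0]
      ring
    rw [h1, Complex.ofReal_cos, Complex.cos, hwz (j:ℤ), hwz (-(j:ℤ))]
    push_cast
    ring_nf
  have key : ∀ m : ℤ, Odd m → m.natAbs < N → ∑ j ∈ Finset.range N, (w ^ m) ^ j = 0 := by
    intro m hm hmN
    have hx1 : w ^ m ≠ 1 := by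
      intro hcon
      rw [hwz m] at hcon
      obtain ⟨k, hk⟩ := Complex.exp_eq_one_iff.mp hcon
      have hr : (m:ℝ) * θ = k * (2 * Real.pi) := by
        apply Complex.ofReal_injective
        apply mul_right_cancel₀ (b := Complex.I) Complex.I_ne_zero
        push_cast at hk ⊢
        linear_combination hk
      rw [hθ] at hr
      have h3 : (m:ℝ) * ((N+1) * Real.pi) = k * (2 * Real.pi) * N := by
        field_simp at hr
        linear_combination Real.pi * hr
      have hint : m * (N+1) = 2 * k * N := by
        have h4 : ((m*(N+1) : ℤ) : ℝ) * Real.pi = ((2*k*N : ℤ) : ℝ) * Real.pi := by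
          push_cast
          linarith
        have h5 := mul_right_cancel₀ Real.pi_ne_zero h4
        exact_mod_cast h5
      have hdvd : (N:ℤ) ∣ m := ⟨2*k - m, by linarith [hint]⟩
      have hm0 : m = 0 :=
        Int.eq_zero_of_dvd_of_natAbs_lt_natAbs hdvd (by simpa using hmN)
      rcases hm with ⟨s, hs⟩
      omega
    have hxN : (w ^ m) ^ N = 1 := by
      rw [← zpow_natCast, ← zpow_mul, hwz (m * N)]
      have : ((m * N : ℤ) : ℝ) * θ = ((m * h : ℤ) : ℝ) * (2 * Real.pi) := by
        rw [hθ]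
        push_cast
        rw [hh']
        field_simp
      rw [this, ← Complex.exp_int_mul_two_pi_mul_I (m * h)]
      congr 1
      push_cast
      ring
    rw [geom_sum_eq hx1, hxN]
    simp
  have termA' : ∀ j : ℕ, ((-1:ℂ))^j * Complex.cos ((j:ℂ) * (Real.pi:ℂ) / (N:ℂ))
      = (w^(j:ℤ) + w^(-(j:ℤ)))/2 := by
    intro j
    have := termA j
    push_cast at this
    exact this
  have hcast : ((∑ j ∈ Finset.range N, ((-1:ℝ)^j * Real.cos (j * Real.pi / N))^p : ℝ) : ℂ) = 0 := by
    push_cast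
    calc ∑ j ∈ Finset.range N, ((-1:ℂ)^j * Complex.cos ((j:ℂ) * (Real.pi:ℂ) / (N:ℂ)))^p
        = ∑ j ∈ Finset.range N, ((w^(j:ℤ) + w^(-(j:ℤ)))/2)^p := by
          refine Finset.sum_congr rfl fun j _ => ?_
          rw [termA' j]
      _ = ∑ j ∈ Finset.range N, ∑ i ∈ Finset.range (p+1),
            (w^((2*i - p : ℤ)))^j * (p.choose i) / 2^p := by
          refine Finset.sum_congr rfl fun j _ => ?_
          rw [div_pow, add_pow, Finset.sum_div]
          refine Finset.sum_congr rfl fun i hi => ?_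
          rw [← zpow_natCast (w^(j:ℤ)) i, ← zpow_natCast (w^(-(j:ℤ))) (p-i), ← zpow_mul, ← zpow_mul,
            ← zpow_add₀ hw0, ← zpow_natCast (w^((2*i - p : ℤ))) j, ← zpow_mul]
          have hi' : i ≤ p := Nat.lt_succ_iff.mp (Finset.mem_range.mp hi)
          have : (j:ℤ) * i + -(j:ℤ) * ((p - i : ℕ) : ℤ) = (2*(i:ℤ) - p) * j := by
            push_cast [hi']
            ring
          rw [this]
      _ = ∑ i ∈ Finset.range (p+1), (∑ j ∈ Finset.range N, (w^((2*i - p : ℤ)))^j) * (p.choose i) / 2^p := by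
          rw [Finset.sum_comm]
          refine Finset.sum_congr rfl fun i _ => ?_
          rw [Finset.sum_mul, Finset.sum_div]
      _ = 0 := by
          refine Finset.sum_eq_zero fun i hi => ?_
          have hi' : i ≤ p := Nat.lt_succ_iff.mp (Finset.mem_range.mp hi)
          obtain ⟨s, hs⟩ := hp
          rw [key (2*i - p : ℤ) ⟨(i:ℤ) - s - 1, by push_cast [hs]; ring⟩ (by omega), zero_mul, zero_div]
  exact_mod_cast hcast


lemma psiPow_neg (p x : ℝ) : psiPow p (-x) = - psiPow p x := by
  unfold psiPow
  rw [Real.sign_neg, abs_neg]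
  ring

lemma psiPow_of_pos {x : ℝ} (hx : 0 < x) (p : ℝ) :
    psiPow p x = Real.exp (Real.log x * p) := by
  unfold psiPow
  rw [Real.sign_of_pos hx, abs_of_pos hx, Real.rpow_def_of_pos hx]
  ring

lemma psiPow_nat_odd (p : ℕ) (hp : Odd p) (x : ℝ) : psiPow (p:ℝ) x = x ^ p := by
  unfold psiPow
  rcases lt_trichotomy x 0 with hx | hx | hx
  · rw [Real.sign_of_neg hx, abs_of_neg hx, Real.rpow_natCast, hp.neg_pow]
    ring
  · subst hx
    rw [Real.sign_zero, zero_mul, zero_pow hp.pos.ne']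
  · rw [Real.sign_of_pos hx, abs_of_pos hx, Real.rpow_natCast, one_mul]

lemma cos_ang_pos {M j : ℕ} (hj : j ≤ M) :
    0 < Real.cos (j * Real.pi / (2*M+1)) := by
  have hpi := Real.pi_pos
  have hden : (0:ℝ) < 2*M+1 := by positivity
  apply Real.cos_pos_of_mem_Ioo
  constructor
  · have : (0:ℝ) ≤ j * Real.pi / (2*M+1) := by positivity
    linarith
  · rw [div_lt_iff₀ hden]
    have hj' : (j:ℝ) ≤ M := by exact_mod_cast hj
    nlinarith

lemma sum_eq_expsum (M : ℕ) (p : ℝ) :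
    ∑ j ∈ Finset.range (2*M+1), (-1:ℝ)^j * psiPow p (Real.cos (j * Real.pi / (2*M+1)))
    = ∑ i : Fin (M+1), (if (i:ℕ) = 0 then 1 else 2*(-1:ℝ)^(i:ℕ))
        * Real.exp (Real.log (Real.cos ((i:ℕ) * Real.pi / (2*M+1))) * p) := by
  set N := 2*M+1 with hN
  have hNR : (2*(M:ℝ)+1) = (N:ℝ) := by rw [hN]; push_cast; ring
  rw [hNR]
  set f : ℕ → ℝ := fun j => (-1:ℝ)^j * psiPow p (Real.cos (j * Real.pi / N)) with hf
  have hsym : ∀ k, 1 ≤ k → k ≤ 2*M → f (N - k) = f k := by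
    intro k hk1 hk2
    have hkN : k ≤ N := by omega
    have hcos : Real.cos ((N - k : ℕ) * Real.pi / N) = - Real.cos (k * Real.pi / N) := by
      have h1 : ((N - k : ℕ) : ℝ) = N - k := by
        push_cast [hkN]; ring
      rw [h1]
      have hNne : (N:ℝ) ≠ 0 := by positivity
      have h2 : ((N:ℝ) - k) * Real.pi / N = Real.pi - k * Real.pi / N := by
        field_simp
      rw [h2, Real.cos_pi_sub]
    have hsign : (-1:ℝ)^(N - k) = -(-1:ℝ)^k := by
      have h3 : (-1:ℝ)^(N-k) * (-1)^k = (-1)^N := by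
        rw [← pow_add]
        congr 1
        omega
      have h4 : ((-1:ℝ))^N = -1 := Odd.neg_one_pow ⟨M, by omega⟩
      rcases Nat.even_or_odd k with hk | hk
      · rw [hk.neg_one_pow] at h3 ⊢
        rw [mul_one] at h3
        rw [h3, h4]
      · rw [hk.neg_one_pow] at h3 ⊢
        rw [h4] at h3
        linarith
    rw [hf]
    simp only
    rw [hcos, hsign, psiPow_neg]
    ring
  have hsplit : ∑ j ∈ Finset.range N, f j
      = f 0 + (∑ j ∈ Finset.range M, f (j+1) + ∑ j ∈ Finset.range M, f (j+1)) := by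
    have h0 : ∑ j ∈ Finset.range N, f j = f 0 + ∑ j ∈ Finset.range (2*M), f (j+1) := by
      rw [hN, Finset.sum_range_succ']
      ring
    have h1 : ∑ j ∈ Finset.range (2*M), f (j+1)
        = ∑ j ∈ Finset.range M, f (j+1) + ∑ j ∈ Finset.Ico M (2*M), f (j+1) := by
      rw [Finset.range_eq_Ico, ← Finset.sum_Ico_consecutive _ (Nat.zero_le M) (by omega), Finset.range_eq_Ico]
    have h2 : ∑ j ∈ Finset.Ico M (2*M), f (j+1) = ∑ j ∈ Finset.range M, f (j+1) := by
      refine Finset.sum_nbij' (fun j => 2*M - 1 - j) (fun j => 2*M - 1 - j) ?_ ?_ ?_ ?_ ?_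
      · intro a ha
        simp only [Finset.mem_Ico] at ha
        simp only [Finset.mem_range]
        omega
      · intro a ha
        simp only [Finset.mem_range] at ha
        simp only [Finset.mem_Ico]
        omega
      · intro a ha
        simp only [Finset.mem_Ico] at ha
        omega
      · intro a ha
        simp only [Finset.mem_range] at ha
        omega
      · intro a ha
        simp only [Finset.mem_Ico] at ha
        have : 2*M - 1 - a + 1 = N - (a+1) := by omega
        rw [this, hsym (a+1) (by omega) (by omega)]
    rw [h0, h1, h2]
  rw [hsplit]
  rw [Fin.sum_univ_succ]
  have hf0 : f 0 = 1 := by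
    rw [hf]
    simp only [pow_zero, Nat.cast_zero, zero_mul, zero_div, Real.cos_zero, one_mul]
    unfold psiPow
    rw [Real.sign_one, abs_one, Real.one_rpow, mul_one]
  have hterm0 : (if ((0 : Fin (M+1)):ℕ) = 0 then (1:ℝ) else 2*(-1:ℝ)^((0 : Fin (M+1)):ℕ))
      * Real.exp (Real.log (Real.cos (((0 : Fin (M+1)):ℕ) * Real.pi / (N:ℝ))) * p) = 1 := by
    simp [Real.log_one]
  rw [hterm0, hf0]
  have hrest : ∑ i : Fin M, (if ((i.succ : Fin (M+1)):ℕ) = 0 then (1:ℝ) else 2*(-1:ℝ)^((i.succ : Fin (M+1)):ℕ))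
      * Real.exp (Real.log (Real.cos (((i.succ : Fin (M+1)):ℕ) * Real.pi / (N:ℝ))) * p)
      = ∑ j ∈ Finset.range M, 2 * f (j+1) := by
    rw [Finset.sum_range fun j => 2 * f (j+1)]
    refine Finset.sum_congr rfl fun i _ => ?_
    have hisucc : ((i.succ : Fin (M+1)):ℕ) = (i:ℕ) + 1 := rfl
    rw [hisucc, if_neg (Nat.succ_ne_zero _), hf]
    simp only
    have hposc : 0 < Real.cos (((i:ℕ)+1 : ℕ) * Real.pi / (N:ℝ)) := by
      rw [← hNR]
      exact cos_ang_pos (by omega : (i:ℕ)+1 ≤ M)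
    rw [psiPow_of_pos hposc]
    push_cast
    ring
  rw [hrest, ← Finset.sum_add_distrib]
  congr 1
  exact Finset.sum_congr rfl fun j _ => by ring

/-- For a positive even integer `α`, `n = α+3`, and
`f(p) = ∑_{j=0}^{n-1} (-1)^j ψ_p(cos(jπ/n))`: `f(p) = 0` for every odd positive
integer `p < n`, and `f(p) < 0` for all `p ∈ (α-1, α+1)`. -/
theorem stmt7 (a : ℕ) (ha : Even a) (hpos : 0 < a) :
    (∀ p : ℕ, Odd p → p < a + 3 →
      ∑ j ∈ Finset.range (a + 3),
        (-1 : ℝ) ^ j * psiPow (p : ℝ) (Real.cos ((j : ℝ) * Real.pi / ((a : ℝ) + 3))) = 0) ∧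
    (∀ p : ℝ, (a : ℝ) - 1 < p → p < (a : ℝ) + 1 →
      ∑ j ∈ Finset.range (a + 3),
        (-1 : ℝ) ^ j * psiPow p (Real.cos ((j : ℝ) * Real.pi / ((a : ℝ) + 3))) < 0) := by
  have ha2 : a % 2 = 0 := Nat.even_iff.mp ha
  obtain ⟨m, hm1, hma⟩ : ∃ m : ℕ, 1 ≤ m ∧ a = 2 * m := ⟨a/2, by omega, by omega⟩
  set M : ℕ := m + 1 with hMdef
  have hna : a + 3 = 2*M+1 := by omega
  have hra : (a:ℝ) + 3 = 2*(M:ℝ)+1 := by exact_mod_cast hna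
  set A : Fin (M+1) → ℝ := fun i => if (i:ℕ) = 0 then 1 else 2*(-1:ℝ)^(i:ℕ) with hA
  set T : Fin (M+1) → ℝ := fun i => Real.log (Real.cos ((i:ℕ) * Real.pi / (2*(M:ℝ)+1))) with hT
  set F : ℝ → ℝ := fun p => ∑ i : Fin (M+1), A i * Real.exp (T i * p) with hF
  have hFS : ∀ p : ℝ, ∑ j ∈ Finset.range (a + 3),
      (-1 : ℝ) ^ j * psiPow p (Real.cos ((j : ℝ) * Real.pi / ((a : ℝ) + 3))) = F p := by
    intro p
    rw [hna, hra, hF]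
    have := sum_eq_expsum M p
    convert this using 3 with i
  have hpi := Real.pi_pos
  have hMR : (0:ℝ) < 2*(M:ℝ)+1 := by positivity
  have hcospos : ∀ j : ℕ, j ≤ M → 0 < Real.cos (j * Real.pi / (2*(M:ℝ)+1)) := by
    intro j hj
    exact_mod_cast cos_ang_pos hj
  have hTanti : ∀ i j : Fin (M+1), (i:ℕ) < (j:ℕ) → T j < T i := by
    intro i j hij
    rw [hT]
    simp only
    apply Real.log_lt_log (hcospos _ (by omega : (j:ℕ) ≤ M))
    apply Real.cos_lt_cos_of_nonneg_of_le_pi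
    · positivity
    · rw [div_le_iff₀ hMR]
      have hjM : ((j:ℕ):ℝ) ≤ M := by exact_mod_cast (by omega : (j:ℕ) ≤ M)
      nlinarith
    · gcongr

  have hTinj : Function.Injective T := by
    intro i j hij
    rcases lt_trichotomy (i:ℕ) (j:ℕ) with h|h|h
    · exact absurd hij.symm (hTanti i j h).ne
    · exact Fin.ext h
    · exact absurd hij (hTanti j i h).ne
  have hT0 : T 0 = 0 := by
    rw [hT]
    simp
  have hA0 : A 0 = 1 := by rw [hA]; simp
  have hTneg : ∀ i : Fin M, T i.succ < 0 := by
    intro i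
    have h1 := hTanti 0 i.succ (by simp)
    rwa [hT0] at h1
  have hAne : ∀ i, A i ≠ 0 := by
    intro i
    rw [hA]
    dsimp only
    split
    · norm_num
    · exact mul_ne_zero two_ne_zero (pow_ne_zero _ (by norm_num))
  have hzero : ∀ q : ℕ, Odd q → q < 2*M+1 → F (q:ℝ) = 0 := by
    intro q hq hqM
    rw [← hFS (q:ℝ)]
    have hrw : ∀ j : ℕ, (-1:ℝ)^j * psiPow (q:ℝ) (Real.cos (↑j * Real.pi / ((a:ℝ)+3)))
        = ((-1:ℝ)^j * Real.cos (↑j * Real.pi / ((a+3:ℕ):ℝ)))^q := by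
      intro j
      rw [psiPow_nat_odd q hq]
      have hc : ((a:ℝ)+3) = ((a+3:ℕ):ℝ) := by push_cast; ring
      rw [hc, mul_pow, ← pow_mul]
      congr 1
      rcases Nat.even_or_odd j with hj | hj
      · rw [hj.neg_one_pow, (hj.mul_right q).neg_one_pow]
      · rw [hj.neg_one_pow, (hj.mul hq).neg_one_pow]
    rw [Finset.sum_congr rfl fun j _ => hrw j]
    exact part1_sum (a+3) q ⟨m+1, by omega⟩ hq (by omega)
  constructor
  · intro p hp hpN
    rw [hFS]
    exact hzero p hp (by omega)
  · intro p hp1 hp2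
    rw [hFS p]
    by_contra hcon
    push_neg at hcon
    have haR : (a:ℝ) = 2*(m:ℝ) := by
      rw [hma]; push_cast; ring
    rw [haR] at hp1 hp2
    set D : ℝ → ℝ := fun x => ∑ i : Fin M, (A i.succ * T i.succ) * Real.exp (T i.succ * x) with hD
    have hFd : ∀ x : ℝ, HasDerivAt F (D x) x := by
      intro x
      have h1 : HasDerivAt F (∑ i : Fin (M+1), A i * T i * Real.exp (T i * x)) x := by
        rw [hF]
        refine HasDerivAt.fun_sum fun i _ => ?_
        have h2 : HasDerivAt (fun y : ℝ => T i * y) (T i) x := by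
          simpa using (hasDerivAt_id x).const_mul (T i)
        have h3 := (h2.exp).const_mul (A i)
        exact h3.congr_deriv (by ring)
      convert h1 using 1
      rw [hD, Fin.sum_univ_succ (f := fun i => A i * T i * Real.exp (T i * x)), hT0]
      simp only [mul_zero, zero_mul, zero_add]
    have hFc : Continuous F := by
      rw [continuous_iff_continuousAt]
      exact fun x => (hFd x).continuousAt
    have hBne : ∀ i : Fin M, A i.succ * T i.succ ≠ 0 :=
      fun i => mul_ne_zero (hAne _) (hTneg i).ne
    have hUinj : Function.Injective (fun i : Fin M => T i.succ) := by
      intro i j hij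
      exact Fin.succ_injective _ (hTinj hij)
    have hzR : ∀ k : ℕ, k ≤ m → F (2*(k:ℝ)+1) = 0 := by
      intro k hk
      have h1 := hzero (2*k+1) ⟨k, by ring⟩ (by omega)
      push_cast at h1
      exact h1
    rcases eq_or_lt_of_le hcon with hFp0 | hFp0
    · -- F p = 0 gives M+1 distinct zeros
      set Z : Finset ℝ := (Finset.image (fun k : Fin M => 2*((k:ℕ):ℝ)+1) Finset.univ) ∪ {p} with hZ
      have hcard : Z.card = M + 1 := by
        rw [hZ, Finset.card_union_of_disjoint, Finset.card_image_of_injective, Finset.card_univ,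
          Fintype.card_fin, Finset.card_singleton]
        · intro x y hxy
          have : ((x:ℕ):ℝ) = ((y:ℕ):ℝ) := by dsimp at hxy; linarith
          exact Fin.ext (by exact_mod_cast this)
        · simp only [Finset.disjoint_singleton_right, Finset.mem_image]
          rintro ⟨k, -, hk⟩
          have hkm : (k:ℕ) ≤ m := by omega
          rcases eq_or_lt_of_le hkm with h|h
          · have : ((k:ℕ):ℝ) = m := by exact_mod_cast h
            rw [this] at hk
            linarith
          · have : ((k:ℕ):ℝ) ≤ (m:ℝ) - 1 := by
              have : (k:ℕ) + 1 ≤ m := h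
              have := (Nat.cast_le (α := ℝ)).mpr this
              push_cast at this
              linarith
            linarith [hk]
      have hle := expsum_card_zeros M A T hAne hTinj Z (by
        intro x hx
        rw [hZ, Finset.mem_union] at hx
        rcases hx with hx | hx
        · obtain ⟨k, -, rfl⟩ := Finset.mem_image.mp hx
          have := hzR (k:ℕ) (by omega)
          rw [hF] at this
          exact this
        · rw [Finset.mem_singleton] at hx
          subst hx
          rw [hF] at hFp0
          exact hFp0.symm)
      omega
    · -- F p > 0 gives M distinct zeros of the derivative
      have hrolle : ∀ k : Fin (m-1), ∃ x ∈ Set.Ioo (2*((k:ℕ):ℝ)+1) (2*((k:ℕ):ℝ)+3), D x = 0 := by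
        intro k
        have hk2 : (k:ℕ) < m - 1 := k.2
        refine exists_hasDerivAt_eq_zero (by linarith) hFc.continuousOn ?_ (fun x _ => hFd x)
        rw [hzR (k:ℕ) (by omega)]
        have h1 := hzR ((k:ℕ)+1) (by omega)
        push_cast at h1
        rw [← h1]
        congr 1
        ring
      choose w hw1 hw2 using hrolle
      have hwlt : ∀ k : Fin (m-1), w k < 2*(m:ℝ)-1 := by
        intro k
        have hk2 : (k:ℕ) < m - 1 := k.2
        have : ((k:ℕ):ℝ) ≤ (m:ℝ) - 2 := by
          have h3 : (k:ℕ) + 2 ≤ m := by omega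
          have := (Nat.cast_le (α := ℝ)).mpr h3
          push_cast at this
          linarith
        have := (hw1 k).2
        linarith
      have hwmono : ∀ k l : Fin (m-1), (k:ℕ) < (l:ℕ) → w k < w l := by
        intro k l hkl
        have h1 := (hw1 k).2
        have h2 := (hw1 l).1
        have : ((k:ℕ):ℝ) + 1 ≤ ((l:ℕ):ℝ) := by exact_mod_cast hkl
        linarith
      have hwinj : Function.Injective w := by
        intro k l hkl
        rcases lt_trichotomy (k:ℕ) (l:ℕ) with h|h|h
        · exact absurd hkl (hwmono k l h).ne
        · exact Fin.ext h
        · exact absurd hkl.symm (hwmono l k h).ne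
      -- maximum point x₁
      obtain ⟨x₁, hx₁mem, hx₁max⟩ := (isCompact_Icc (a := 2*(m:ℝ)-1) (b := 2*(m:ℝ)+1)).exists_isMaxOn
        (Set.nonempty_Icc.mpr (by linarith)) hFc.continuousOn
      have hpmem : p ∈ Set.Icc (2*(m:ℝ)-1) (2*(m:ℝ)+1) := ⟨by linarith, by linarith⟩
      have hFx₁ : 0 < F x₁ := lt_of_lt_of_le hFp0 (hx₁max hpmem)
      have hFL : F (2*(m:ℝ)-1) = 0 := by
        have h1 := hzR (m-1) (by omega)
        have h2 : ((m-1 : ℕ):ℝ) = (m:ℝ) - 1 := by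
          rw [Nat.cast_sub hm1]
          norm_num
        rw [h2] at h1
        rw [← h1]
        congr 1
        ring
      have hFR : F (2*(m:ℝ)+1) = 0 := hzR m le_rfl
      have hx₁Ioo : x₁ ∈ Set.Ioo (2*(m:ℝ)-1) (2*(m:ℝ)+1) := by
        rcases hx₁mem.1.lt_or_eq with h|h
        · rcases hx₁mem.2.lt_or_eq with h'|h'
          · exact ⟨h, h'⟩
          · rw [h'] at hFx₁
            rw [hFR] at hFx₁
            linarith
        · rw [← h] at hFx₁
          rw [hFL] at hFx₁
          linarith
      have hDx₁ : D x₁ = 0 :=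
        (hx₁max.isLocalMax (Icc_mem_nhds hx₁Ioo.1 hx₁Ioo.2)).hasDerivAt_eq_zero (hFd x₁)
      -- F tends to 1 at infinity
      have htend : Tendsto F atTop (nhds 1) := by
        have h1 : F = fun q => 1 + ∑ i : Fin M, A i.succ * Real.exp (T i.succ * q) := by
          funext q
          simp only [hF]
          rw [Fin.sum_univ_succ (f := fun i => A i * Real.exp (T i * q)), hT0, hA0]
          simp
        rw [h1]
        have h2 : Tendsto (fun q : ℝ => ∑ i : Fin M, A i.succ * Real.exp (T i.succ * q))
            atTop (nhds 0) := by
          have h3 : ∀ i : Fin M, Tendsto (fun q : ℝ => A i.succ * Real.exp (T i.succ * q))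
              atTop (nhds 0) := by
            intro i
            have h4 : Tendsto (fun q : ℝ => T i.succ * q) atTop atBot :=
              (tendsto_const_mul_atBot_of_neg (hTneg i)).mpr tendsto_id
            have h5 := Real.tendsto_exp_atBot.comp h4
            have h6 := h5.const_mul (A i.succ)
            simpa using h6
          have := tendsto_finset_sum Finset.univ (fun i _ => h3 i)
          simpa using this
        have := tendsto_const_nhds (x := (1:ℝ)) (f := atTop (α := ℝ)) |>.add h2
        simpa using this
      obtain ⟨P, hPgt, hPF⟩ : ∃ P, 2*(m:ℝ)+1 < P ∧ 0 < F P := by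
        have h2 := htend.eventually (eventually_gt_nhds (show (0:ℝ) < 1 by norm_num))
        obtain ⟨P, h3, h4⟩ := (h2.and (eventually_gt_atTop (2*(m:ℝ)+1))).exists
        exact ⟨P, h4, h3⟩
      -- minimum point x₂
      obtain ⟨x₂, hx₂mem, hx₂min⟩ := (isCompact_Icc (a := x₁) (b := P)).exists_isMinOn
        (Set.nonempty_Icc.mpr (by linarith [hx₁Ioo.2])) hFc.continuousOn
      have hRmem : (2*(m:ℝ)+1) ∈ Set.Icc x₁ P := ⟨le_of_lt hx₁Ioo.2, le_of_lt hPgt⟩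
      have hFx₂ : F x₂ ≤ 0 := (hx₂min hRmem).trans (le_of_eq hFR)
      have hx₂Ioo : x₂ ∈ Set.Ioo x₁ P := by
        rcases hx₂mem.1.lt_or_eq.symm with h|h
        · exfalso
          have : F x₁ = F x₂ := by rw [h]
          linarith
        · rcases hx₂mem.2.lt_or_eq with h'|h'
          · exact ⟨h, h'⟩
          · rw [h'] at hFx₂
            linarith
      have hDx₂ : D x₂ = 0 :=
        (hx₂min.isLocalMin (Icc_mem_nhds hx₂Ioo.1 hx₂Ioo.2)).hasDerivAt_eq_zero (hFd x₂)
      -- assemble M distinct zeros of D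
      set Z : Finset ℝ := (Finset.image w Finset.univ) ∪ {x₁, x₂} with hZ
      have hx₁x₂ : x₁ < x₂ := hx₂Ioo.1
      have hcard : Z.card = M := by
        rw [hZ, Finset.card_union_of_disjoint, Finset.card_image_of_injective _ hwinj,
          Finset.card_univ, Fintype.card_fin]
        · rw [Finset.card_insert_of_notMem (by simp [hx₁x₂.ne]), Finset.card_singleton]
          omega
        · simp only [Finset.disjoint_insert_right, Finset.disjoint_singleton_right,
            Finset.mem_image]
          constructor
          · rintro ⟨k, -, hk⟩
            have := hwlt k
            rw [hk] at this
            linarith [hx₁Ioo.1]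
          · rintro ⟨k, -, hk⟩
            have := hwlt k
            rw [hk] at this
            linarith [hx₁Ioo.1, hx₁x₂]
      have hle := expsum_card_zeros m (fun i : Fin (m+1) => A i.succ * T i.succ)
        (fun i : Fin (m+1) => T i.succ) (fun i => hBne i) (fun i j hij => hUinj hij) Z (by
          intro x hx
          rw [hZ, Finset.mem_union] at hx
          rcases hx with hx | hx
          · obtain ⟨k, -, rfl⟩ := Finset.mem_image.mp hx
            have := hw2 k
            rw [hD] at this
            exact this
          · rw [Finset.mem_insert, Finset.mem_singleton] at hx
            rcases hx with rfl | rfl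
            · rw [hD] at hDx₁; exact hDx₁
            · rw [hD] at hDx₂; exact hDx₂)
      omega
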